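/- arXiv:0906.2535 — 6 statements merged into one kernel-verified Lean document; each statement's English description precedes it below -/
import Mathlib

section
/- For any vertex x and any function u of finite energy, the energy inner product satisfies ⟨δ_x, u⟩_E = (Δu)(x), where Δ is the network Laplacian. -/
private lemma fiber_tsum_left {V : Type*} [DecidableEq V] (x : V) (g : V → ℝ) :
    ∑' p : V × V, (if p.1 = x then g p.2 else 0) = ∑' y, g y := by
  have hinj : Function.Injective (fun y : V => ((x, y) : V × V)) := by
    intro a b h; simpa using h
  have hsupp : Function.support (fun p : V × V => if p.1 = x then g p.2 else 0)
      ⊆ Set.range (fun y : V => ((x, y) : V × V)) := by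
    intro p hp
    simp only [Function.mem_support] at hp
    by_cases h : p.1 = x
    · exact ⟨p.2, by simp [← h]⟩
    · simp [h] at hp
  have := hinj.tsum_eq hsupp
  simpa using this.symm

private lemma fiber_tsum_right {V : Type*} [DecidableEq V] (x : V) (g : V → ℝ) :
    ∑' p : V × V, (if p.2 = x then g p.1 else 0) = ∑' y, g y := by
  have hinj : Function.Injective (fun y : V => ((y, x) : V × V)) := by
    intro a b h; simpa using h
  have hsupp : Function.support (fun p : V × V => if p.2 = x then g p.1 else 0)
      ⊆ Set.range (fun y : V => ((y, x) : V × V)) := by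
    intro p hp
    simp only [Function.mem_support] at hp
    by_cases h : p.2 = x
    · exact ⟨p.1, by simp [← h]⟩
    · simp [h] at hp
  have := hinj.tsum_eq hsupp
  simpa using this.symm

private lemma fiber_summable_left {V : Type*} [DecidableEq V] (x : V) {g : V → ℝ}
    (hg : Summable g) : Summable (fun p : V × V => if p.1 = x then g p.2 else 0) := by
  have hinj : Function.Injective (fun y : V => ((x, y) : V × V)) := by
    intro a b h; simpa using h
  rw [← hinj.summable_iff]
  · simpa [Function.comp_def] using hg
  · intro p hp
    by_cases h : p.1 = x
    · exact absurd ⟨p.2, by simp [← h]⟩ hp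
    · simp [h]

private lemma fiber_summable_right {V : Type*} [DecidableEq V] (x : V) {g : V → ℝ}
    (hg : Summable g) : Summable (fun p : V × V => if p.2 = x then g p.1 else 0) := by
  have hinj : Function.Injective (fun y : V => ((y, x) : V × V)) := by
    intro a b h; simpa using h
  rw [← hinj.summable_iff]
  · simpa [Function.comp_def] using hg
  · intro p hp
    by_cases h : p.2 = x
    · exact absurd ⟨p.1, by simp [← h]⟩ hp
    · simp [h]

/-- For any vertex `x` and any function `u` of finite energy,
the energy inner product satisfies `⟨δ_x, u⟩_E = (Δu)(x)`, where
`⟨v, u⟩_E = (1/2) Σ_{s,t} c_{st} (v s - v t)(u s - u t)` and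
`(Δu)(x) = Σ_y c_{xy} (u x - u y)`. -/
theorem einner_dirac_eq_laplacian {V : Type*} [DecidableEq V]
    (c : V → V → ℝ)
    (hsymm : ∀ x y, c x y = c y x)
    (hnonneg : ∀ x y, 0 ≤ c x y)
    (hloop : ∀ x, c x x = 0)
    (x : V)
    (hdeg : Summable (fun y => c x y))
    (u : V → ℝ)
    (hfin : Summable (fun p : V × V => c p.1 p.2 * (u p.1 - u p.2) ^ 2))
    (hpair : Summable (fun p : V × V =>
        c p.1 p.2 * ((if p.1 = x then (1:ℝ) else 0) - (if p.2 = x then (1:ℝ) else 0))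
          * (u p.1 - u p.2)))
    (hLap : Summable (fun y => c x y * (u x - u y))) :
    (1 / 2) * ∑' p : V × V,
        c p.1 p.2 * ((if p.1 = x then (1:ℝ) else 0) - (if p.2 = x then (1:ℝ) else 0))
          * (u p.1 - u p.2)
      = ∑' y : V, c x y * (u x - u y) := by
  have hLap' : Summable (fun y => c y x * (u x - u y)) := by
    simpa [hsymm x] using hLap
  have hkey : ∀ p : V × V,
      c p.1 p.2 * ((if p.1 = x then (1:ℝ) else 0) - (if p.2 = x then (1:ℝ) else 0))
          * (u p.1 - u p.2)
      = (if p.1 = x then c x p.2 * (u x - u p.2) else 0)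
        + (if p.2 = x then c p.1 x * (u x - u p.1) else 0) := by
    rintro ⟨a, b⟩
    by_cases ha : a = x <;> by_cases hb : b = x <;>
      simp [ha, hb, hloop] <;> ring
  have hs1 := fiber_summable_left x hLap
  have hs2 := fiber_summable_right x hLap'
  calc (1 / 2) * ∑' p : V × V,
        c p.1 p.2 * ((if p.1 = x then (1:ℝ) else 0) - (if p.2 = x then (1:ℝ) else 0))
          * (u p.1 - u p.2)
      = (1 / 2) * ∑' p : V × V, ((if p.1 = x then c x p.2 * (u x - u p.2) else 0)
          + (if p.2 = x then c p.1 x * (u x - u p.1) else 0)) := by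
        rw [tsum_congr hkey]
    _ = (1 / 2) * ((∑' p : V × V, (if p.1 = x then c x p.2 * (u x - u p.2) else 0))
          + ∑' p : V × V, (if p.2 = x then c p.1 x * (u x - u p.1) else 0)) := by
        rw [Summable.tsum_add hs1 hs2]
    _ = (1 / 2) * ((∑' y, c x y * (u x - u y)) + ∑' y, c y x * (u x - u y)) := by
        rw [fiber_tsum_left x (fun y => c x y * (u x - u y)),
          fiber_tsum_right x (fun y => c y x * (u x - u y))]
    _ = ∑' y : V, c x y * (u x - u y) := by
        have : (fun y => c y x * (u x - u y)) = fun y => c x y * (u x - u y) := by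
          funext y; rw [hsymm]
        rw [this]; ring
end

section
/- On a finite connected resistance network, R(x,y) equals the supremum of |v(x) − v(y)|² over all functions v with E(v) ≤ 1; equivalently, R(x,y) is the smallest constant κ ≥ 0 such that |v(x) − v(y)|² ≤ κ E(v) for all v of finite energy. -/
open scoped BigOperators

/-- On a finite connected resistance network, the effective
resistance `R(x,y) = w(x) − w(y)` (with `Δw = δ_x − δ_y`) equals the supremum of
`|v(x) − v(y)|²` over all `v` with `E(v) ≤ 1`, and is the least constant
`κ ≥ 0` with `|v(x) − v(y)|² ≤ κ E(v)` for all `v`. -/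
theorem effective_resistance_variational {V : Type*} [Fintype V] [DecidableEq V]
    (c : V → V → ℝ)
    (hsymm : ∀ x y, c x y = c y x)
    (hnonneg : ∀ x y, 0 ≤ c x y)
    (hloop : ∀ x, c x x = 0)
    (hconn : ∀ x y : V, Relation.ReflTransGen (fun a b => 0 < c a b) x y)
    (x y : V)
    (w : V → ℝ)
    (hdipole : ∀ s, ∑ t : V, c s t * (w s - w t)
      = (if s = x then (1:ℝ) else 0) - (if s = y then (1:ℝ) else 0)) :
    w x - w y
        = sSup {r : ℝ | ∃ v : V → ℝ,
            (1 / 2) * (∑ s : V, ∑ t : V, c s t * (v s - v t) ^ 2) ≤ 1 ∧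
            r = (v x - v y) ^ 2} ∧
      IsLeast {κ : ℝ | 0 ≤ κ ∧ ∀ v : V → ℝ,
            (v x - v y) ^ 2
              ≤ κ * ((1 / 2) * ∑ s : V, ∑ t : V, c s t * (v s - v t) ^ 2)}
        (w x - w y) := by
  classical
  set R := w x - w y with hRdef
  -- The bilinear pairing of w with any v computes 2 * (v x - v y).
  have hB : ∀ v : V → ℝ,
      (∑ s : V, ∑ t : V, c s t * (w s - w t) * (v s - v t)) = 2 * (v x - v y) := by
    intro v
    have h1 : (∑ s : V, ∑ t : V, c s t * (w s - w t) * (v s - v t))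
        = (∑ s : V, ∑ t : V, c s t * (w s - w t) * v s)
          - (∑ s : V, ∑ t : V, c s t * (w s - w t) * v t) := by
      rw [← Finset.sum_sub_distrib]
      refine Finset.sum_congr rfl fun s _ => ?_
      rw [← Finset.sum_sub_distrib]
      exact Finset.sum_congr rfl fun t _ => by ring
    have h2 : (∑ s : V, ∑ t : V, c s t * (w s - w t) * v t)
        = ∑ a : V, ∑ b : V, -(c a b * (w a - w b) * v a) := by
      rw [Finset.sum_comm]
      refine Finset.sum_congr rfl fun a _ => Finset.sum_congr rfl fun b _ => ?_
      rw [hsymm b a]; ring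
    have h3 : (∑ s : V, ∑ t : V, c s t * (w s - w t) * v s) = v x - v y := by
      have hrow : ∀ s : V, (∑ t : V, c s t * (w s - w t) * v s)
          = ((if s = x then (1:ℝ) else 0) - (if s = y then (1:ℝ) else 0)) * v s := by
        intro s
        rw [← Finset.sum_mul, hdipole s]
      simp only [hrow, sub_mul, ite_mul, one_mul, zero_mul]
      rw [Finset.sum_sub_distrib]
      simp [Finset.sum_ite_eq']
    rw [h1, h2]
    simp only [Finset.sum_neg_distrib]
    rw [h3]; ring
  have hw2 : (∑ s : V, ∑ t : V, c s t * (w s - w t) ^ 2) = 2 * R := by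
    have h : (∑ s : V, ∑ t : V, c s t * (w s - w t) ^ 2)
        = ∑ s : V, ∑ t : V, c s t * (w s - w t) * (w s - w t) :=
      Finset.sum_congr rfl fun s _ => Finset.sum_congr rfl fun t _ => by ring
    rw [h, hB w]
  have hQw : (1/2 : ℝ) * (∑ s : V, ∑ t : V, c s t * (w s - w t) ^ 2) = R := by
    rw [hw2]; ring
  have hQnonneg : ∀ v : V → ℝ,
      0 ≤ (1/2 : ℝ) * (∑ s : V, ∑ t : V, c s t * (v s - v t) ^ 2) := by
    intro v
    have h : 0 ≤ ∑ s : V, ∑ t : V, c s t * (v s - v t) ^ 2 :=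
      Finset.sum_nonneg fun s _ => Finset.sum_nonneg fun t _ =>
        mul_nonneg (hnonneg s t) (sq_nonneg _)
    linarith
  have hR0 : 0 ≤ R := hQw ▸ hQnonneg w
  have hexp : ∀ (a : ℝ) (v : V → ℝ),
      (∑ s : V, ∑ t : V, c s t * ((v s + a * w s) - (v t + a * w t)) ^ 2)
      = (∑ s : V, ∑ t : V, c s t * (v s - v t) ^ 2)
        + (2 * a) * (∑ s : V, ∑ t : V, c s t * (w s - w t) * (v s - v t))
        + a ^ 2 * (∑ s : V, ∑ t : V, c s t * (w s - w t) ^ 2) := by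
    intro a v
    rw [Finset.mul_sum, Finset.mul_sum, ← Finset.sum_add_distrib, ← Finset.sum_add_distrib]
    refine Finset.sum_congr rfl fun s _ => ?_
    rw [Finset.mul_sum, Finset.mul_sum, ← Finset.sum_add_distrib, ← Finset.sum_add_distrib]
    exact Finset.sum_congr rfl fun t _ => by ring
  -- Cauchy–Schwarz specialized to w
  have hCS : ∀ v : V → ℝ, (v x - v y) ^ 2
      ≤ R * ((1/2 : ℝ) * ∑ s : V, ∑ t : V, c s t * (v s - v t) ^ 2) := by
    intro v
    have hq : ∀ a : ℝ, 0 ≤ R * (a * a) + (2 * (v x - v y)) * a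
        + ((1/2 : ℝ) * ∑ s : V, ∑ t : V, c s t * (v s - v t) ^ 2) := by
      intro a
      have h0 : 0 ≤ (1/2 : ℝ) *
          ∑ s : V, ∑ t : V, c s t * ((v s + a * w s) - (v t + a * w t)) ^ 2 :=
        hQnonneg _
      rw [hexp a v, hB v, hw2] at h0
      have heq : R * (a * a) + (2 * (v x - v y)) * a
          + ((1/2 : ℝ) * ∑ s : V, ∑ t : V, c s t * (v s - v t) ^ 2)
          = (1/2 : ℝ) * ((∑ s : V, ∑ t : V, c s t * (v s - v t) ^ 2)
            + (2 * a) * (2 * (v x - v y)) + a ^ 2 * (2 * R)) := by ring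
      rw [heq]
      exact h0
    have hd := discrim_le_zero hq
    rw [discrim] at hd
    nlinarith [hd]
  have hgreat : IsGreatest {r : ℝ | ∃ v : V → ℝ,
      (1 / 2) * (∑ s : V, ∑ t : V, c s t * (v s - v t) ^ 2) ≤ 1 ∧
      r = (v x - v y) ^ 2} R := by
    constructor
    · by_cases hR : R = 0
      · refine ⟨fun _ => 0, ?_, ?_⟩
        · simp
        · simp [hR]
      · have hRpos : 0 < R := lt_of_le_of_ne hR0 (Ne.symm hR)
        have hs : Real.sqrt R ^ 2 = R := Real.sq_sqrt hR0
        have hspos : 0 < Real.sqrt R := Real.sqrt_pos.mpr hRpos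
        refine ⟨fun s => (Real.sqrt R)⁻¹ * w s, ?_, ?_⟩
        · have hsc : (∑ s : V, ∑ t : V,
              c s t * ((Real.sqrt R)⁻¹ * w s - (Real.sqrt R)⁻¹ * w t) ^ 2)
              = ((Real.sqrt R)⁻¹) ^ 2 * ∑ s : V, ∑ t : V, c s t * (w s - w t) ^ 2 := by
            rw [Finset.mul_sum]
            refine Finset.sum_congr rfl fun s _ => ?_
            rw [Finset.mul_sum]
            exact Finset.sum_congr rfl fun t _ => by ring
          rw [hsc, hw2, inv_pow, hs]
          rw [show (1/2 : ℝ) * (R⁻¹ * (2 * R)) = 1 by field_simp]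
        · have : ((Real.sqrt R)⁻¹ * w x - (Real.sqrt R)⁻¹ * w y) ^ 2
              = ((Real.sqrt R)⁻¹) ^ 2 * R ^ 2 := by
            rw [hRdef]; ring
          rw [this, inv_pow, hs]
          field_simp
    · rintro r ⟨v, hv1, rfl⟩
      calc (v x - v y) ^ 2
          ≤ R * ((1/2 : ℝ) * ∑ s : V, ∑ t : V, c s t * (v s - v t) ^ 2) := hCS v
        _ ≤ R * 1 := mul_le_mul_of_nonneg_left hv1 hR0
        _ = R := mul_one R
  refine ⟨hgreat.csSup_eq.symm, ⟨⟨hR0, fun v => hCS v⟩, ?_⟩⟩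
  rintro κ ⟨hκ0, hκ⟩
  have h := hκ w
  rw [hQw] at h
  rcases eq_or_lt_of_le hR0 with h0 | hpos
  · rw [← h0]; exact hκ0
  · nlinarith
end

section
/- The wired resistance never exceeds the free resistance: R^W(x,y) ≤ R^F(x,y) for all vertices x, y, with R^F(x,y) − R^W(x,y) = E(h_x − h_y), where h_x is the harmonic component of v_x. -/
/-- In the energy Hilbert space `H_E = Fin ⊕ Harm` (Royden
decomposition), with `f_x` the projection of the energy-kernel element `v_x`
onto `Fin` and `h_x = v_x − f_x` its harmonic component, the wired resistance
`R^W(x,y) = ‖f_x − f_y‖²` never exceeds the free resistance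
`R^F(x,y) = ‖v_x − v_y‖²`, and `R^F − R^W = ‖h_x − h_y‖² = E(h_x − h_y)`. -/
theorem wired_le_free_resistance {V : Type*} {H : Type*}
    [NormedAddCommGroup H] [InnerProductSpace ℝ H] [CompleteSpace H]
    (Fin : Submodule ℝ H) [CompleteSpace Fin]
    (v : V → H)
    (f : V → H) (hf : ∀ x, f x = (Submodule.orthogonalProjectionOnto Fin (v x) : H))
    (h : V → H) (hh : ∀ x, h x = v x - f x)
    (RF RW : V → V → ℝ)
    (hRF : ∀ x y, RF x y = ‖v x - v y‖ ^ 2)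
    (hRW : ∀ x y, RW x y = ‖f x - f y‖ ^ 2)
    (x y : V) :
    RW x y ≤ RF x y ∧ RF x y - RW x y = ‖h x - h y‖ ^ 2 := by
  have hfmem : ∀ z, f z ∈ Fin := fun z => (hf z) ▸ (Submodule.orthogonalProjectionOnto Fin (v z)).2
  have hhmem : ∀ z, h z ∈ Finᗮ := fun z => by
    rw [hh z, hf z]
    exact Submodule.sub_starProjection_mem_orthogonal (K := Fin) (v z)
  have horth : (inner ℝ (f x - f y) (h x - h y) : ℝ) = 0 :=
    Submodule.inner_right_of_mem_orthogonal (Submodule.sub_mem _ (hfmem x) (hfmem y))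
      (Submodule.sub_mem _ (hhmem x) (hhmem y))
  have hdecomp : v x - v y = (f x - f y) + (h x - h y) := by
    rw [hh x, hh y]; abel
  have hpyth : ‖v x - v y‖ ^ 2 = ‖f x - f y‖ ^ 2 + ‖h x - h y‖ ^ 2 := by
    rw [hdecomp, norm_add_sq_real, horth]; ring
  rw [hRF, hRW, hpyth]
  constructor
  · nlinarith [sq_nonneg ‖h x - h y‖]
  · ring
end

section
/- The energy Hilbert space decomposes orthogonally as H_E = Fin ⊕ Harm: every finite-energy function is uniquely (mod constants) the sum of an element of the closure of the finitely supported functions and a finite-energy harmonic function, and these subspaces are orthogonal with respect to the energy inner product. -/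
open scoped Classical

/-- Membership in the domain of the energy form: `u` has finite energy. -/
def FiniteEnergy {V : Type*} (c : V → V → ℝ) (u : V → ℝ) : Prop :=
  Summable (fun p : V × V => c p.1 p.2 * (u p.1 - u p.2) ^ 2)

/-- The energy bilinear form `⟨u,v⟩_E = (1/2) Σ_{s,t} c_{st}(u s - u t)(v s - v t)`. -/
noncomputable def einner {V : Type*} (c : V → V → ℝ) (u v : V → ℝ) : ℝ :=
  (1 / 2) * ∑' p : V × V, c p.1 p.2 * (u p.1 - u p.2) * (v p.1 - v p.2)

/-- `f` lies in `Fin`, the energy-closure of the finitely supported functions. -/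
def MemFinClosure {V : Type*} (c : V → V → ℝ) (f : V → ℝ) : Prop :=
  FiniteEnergy c f ∧ ∀ ε : ℝ, 0 < ε → ∃ g : V → ℝ, (Function.support g).Finite ∧
    einner c (fun z => f z - g z) (fun z => f z - g z) < ε

/-- `h` is harmonic: `Δh(x) = Σ_y c_{xy}(h x - h y) = 0` at every vertex. -/
def Harmonic {V : Type*} (c : V → V → ℝ) (h : V → ℝ) : Prop :=
  ∀ x, Summable (fun y => c x y * (h x - h y)) ∧ ∑' y : V, c x y * (h x - h y) = 0

namespace RoydenAux

variable {V : Type*} {c : V → V → ℝ} {u v w A B f g h : V → ℝ}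

lemma summable_es (hu : FiniteEnergy c u) :
    Summable (fun p : V × V => c p.1 p.2 * (u p.1 - u p.2) * (u p.1 - u p.2)) :=
  hu.congr fun p => by ring

lemma summable_cross (hnonneg : ∀ x y, 0 ≤ c x y)
    (hu : FiniteEnergy c u) (hv : FiniteEnergy c v) :
    Summable (fun p : V × V => c p.1 p.2 * (u p.1 - u p.2) * (v p.1 - v p.2)) := by
  rw [← summable_abs_iff]
  refine Summable.of_nonneg_of_le (fun p => abs_nonneg _) (fun p => ?_)
    (((hu.add hv).mul_left (1/2)))
  have hc := hnonneg p.1 p.2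
  have h1 : |c p.1 p.2 * (u p.1 - u p.2) * (v p.1 - v p.2)|
      = c p.1 p.2 * (|u p.1 - u p.2| * |v p.1 - v p.2|) := by
    rw [abs_mul, abs_mul, abs_of_nonneg hc]; ring
  rw [h1]
  have h2 := mul_nonneg hc (sq_nonneg (|u p.1 - u p.2| - |v p.1 - v p.2|))
  have h3 : |u p.1 - u p.2| ^ 2 = (u p.1 - u p.2) ^ 2 := sq_abs _
  have h4 : |v p.1 - v p.2| ^ 2 = (v p.1 - v p.2) ^ 2 := sq_abs _
  nlinarith [abs_nonneg (u p.1 - u p.2), abs_nonneg (v p.1 - v p.2)]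

lemma fe_comb (hnonneg : ∀ x y, 0 ≤ c x y)
    (hu : FiniteEnergy c u) (hv : FiniteEnergy c v) (s t : ℝ) :
    FiniteEnergy c (fun z => s * u z + t * v z) := by
  show Summable _
  have := ((hu.mul_left (s*s)).add
      (((summable_cross hnonneg hu hv).mul_left (2*(s*t))).add (hv.mul_left (t*t))))
  exact this.congr fun p => by simp only []; ring

lemma fe_sub (hnonneg : ∀ x y, 0 ≤ c x y)
    (hu : FiniteEnergy c u) (hv : FiniteEnergy c v) :
    FiniteEnergy c (fun z => u z - v z) :=
  (fe_comb hnonneg hu hv 1 (-1)).congr fun p => by simp only []; ring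

lemma fe_add (hnonneg : ∀ x y, 0 ≤ c x y)
    (hu : FiniteEnergy c u) (hv : FiniteEnergy c v) :
    FiniteEnergy c (fun z => u z + v z) :=
  (fe_comb hnonneg hu hv 1 1).congr fun p => by simp only []; ring

lemma fe_smul (hnonneg : ∀ x y, 0 ≤ c x y) (hu : FiniteEnergy c u) (r : ℝ) :
    FiniteEnergy c (fun z => r * u z) :=
  (fe_comb hnonneg hu hu r 0).congr fun p => by simp only []; ring

lemma expand2 (hnonneg : ∀ x y, 0 ≤ c x y)
    (hu : FiniteEnergy c u) (hv : FiniteEnergy c v) (s t : ℝ) :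
    einner c (fun z => s * u z + t * v z) (fun z => s * u z + t * v z)
      = s*s * einner c u u + 2*(s*t) * einner c u v + t*t * einner c v v := by
  unfold einner
  have h1 := summable_es hu
  have h2 := (summable_cross hnonneg hu hv).mul_left (2*(s*t))
  have h3 := (summable_es hv).mul_left (t*t)
  have h0 := h1.mul_left (s*s)
  have key : (fun p : V × V => c p.1 p.2 * ((s * u p.1 + t * v p.1) - (s * u p.2 + t * v p.2))
      * ((s * u p.1 + t * v p.1) - (s * u p.2 + t * v p.2)))
      = fun p : V × V => (s*s) * (c p.1 p.2 * (u p.1 - u p.2) * (u p.1 - u p.2))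
        + ((2*(s*t)) * (c p.1 p.2 * (u p.1 - u p.2) * (v p.1 - v p.2))
          + (t*t) * (c p.1 p.2 * (v p.1 - v p.2) * (v p.1 - v p.2))) := by
    funext p; ring
  rw [key, Summable.tsum_add h0 (h2.add h3), Summable.tsum_add h2 h3, tsum_mul_left, tsum_mul_left, tsum_mul_left]
  ring

lemma einner_nonneg (hnonneg : ∀ x y, 0 ≤ c x y) (u : V → ℝ) : 0 ≤ einner c u u := by
  unfold einner
  refine mul_nonneg (by norm_num) (tsum_nonneg fun p => ?_)
  have := hnonneg p.1 p.2
  nlinarith [sq_nonneg (u p.1 - u p.2)]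

lemma cs_sq (hnonneg : ∀ x y, 0 ≤ c x y)
    (hu : FiniteEnergy c u) (hv : FiniteEnergy c v) :
    (einner c u v)^2 ≤ einner c u u * einner c v v := by
  have key : ∀ x : ℝ, 0 ≤ (einner c v v) * (x * x) + (2 * einner c u v) * x + einner c u u := by
    intro x
    have := einner_nonneg hnonneg (fun z => 1 * u z + x * v z)
    rw [expand2 hnonneg hu hv 1 x] at this
    nlinarith [this]
  have := discrim_le_zero key
  rw [discrim] at this
  nlinarith [this]

lemma einner_le_sqrt (hnonneg : ∀ x y, 0 ≤ c x y)
    (hu : FiniteEnergy c u) (hv : FiniteEnergy c v) :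
    einner c u v ≤ Real.sqrt (einner c u u) * Real.sqrt (einner c v v) := by
  have h1 := cs_sq hnonneg hu hv
  have h2 : einner c u v ≤ |einner c u v| := le_abs_self _
  have h3 : |einner c u v| = Real.sqrt ((einner c u v)^2) := (Real.sqrt_sq_eq_abs _).symm
  have h4 : Real.sqrt ((einner c u v)^2) ≤ Real.sqrt (einner c u u * einner c v v) :=
    Real.sqrt_le_sqrt h1
  rw [Real.sqrt_mul (einner_nonneg hnonneg u)] at h4
  linarith

lemma sqrt_triangle (hnonneg : ∀ x y, 0 ≤ c x y)
    (hA : FiniteEnergy c A) (hB : FiniteEnergy c B) :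
    Real.sqrt (einner c (fun z => A z + B z) (fun z => A z + B z))
      ≤ Real.sqrt (einner c A A) + Real.sqrt (einner c B B) := by
  have h1 : (fun z => A z + B z) = (fun z => 1 * A z + 1 * B z) := by funext z; ring
  have h2 : einner c (fun z => A z + B z) (fun z => A z + B z)
      ≤ (Real.sqrt (einner c A A) + Real.sqrt (einner c B B))^2 := by
    rw [h1, expand2 hnonneg hA hB 1 1]
    have h3 := einner_le_sqrt hnonneg hA hB
    have h4 := Real.sq_sqrt (einner_nonneg hnonneg A)
    have h5 := Real.sq_sqrt (einner_nonneg hnonneg B)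
    nlinarith
  calc Real.sqrt (einner c (fun z => A z + B z) (fun z => A z + B z))
      ≤ Real.sqrt ((Real.sqrt (einner c A A) + Real.sqrt (einner c B B))^2) :=
        Real.sqrt_le_sqrt h2
    _ = Real.sqrt (einner c A A) + Real.sqrt (einner c B B) :=
        Real.sqrt_sq (by positivity)

lemma einner_add_left (hnonneg : ∀ x y, 0 ≤ c x y)
    (hu : FiniteEnergy c u) (hv : FiniteEnergy c v) (hw : FiniteEnergy c w) :
    einner c (fun z => u z + v z) w = einner c u w + einner c v w := by
  unfold einner
  have h1 := summable_cross hnonneg hu hw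
  have h2 := summable_cross hnonneg hv hw
  have key : (fun p : V × V => c p.1 p.2 * ((u p.1 + v p.1) - (u p.2 + v p.2)) * (w p.1 - w p.2))
      = fun p : V × V => (c p.1 p.2 * (u p.1 - u p.2) * (w p.1 - w p.2))
        + (c p.1 p.2 * (v p.1 - v p.2) * (w p.1 - w p.2)) := by funext p; ring
  rw [key, Summable.tsum_add h1 h2]; ring

lemma einner_smul_left (r : ℝ) :
    einner c (fun z => r * u z) w = r * einner c u w := by
  unfold einner
  have key : (fun p : V × V => c p.1 p.2 * ((r * u p.1) - (r * u p.2)) * (w p.1 - w p.2))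
      = fun p : V × V => r * (c p.1 p.2 * (u p.1 - u p.2) * (w p.1 - w p.2)) := by
    funext p; ring
  rw [key, tsum_mul_left]; ring

lemma einner_comm : einner c u v = einner c v u := by
  unfold einner; congr 1; exact tsum_congr fun p => by ring

noncomputable def dd (x : V) : V → ℝ := fun z => if z = x then (1:ℝ) else 0

lemma summable_slice (hv : FiniteEnergy c v) (x : V) :
    Summable (fun y => c x y * (v x - v y) ^ 2) := by
  have hinj : Function.Injective (fun y : V => ((x, y) : V × V)) := by
    intro a b hab; exact congrArg Prod.snd hab
  exact (hv.comp_injective hinj)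

lemma summable_lap (hnonneg : ∀ x y, 0 ≤ c x y) (hdeg : ∀ x, Summable (fun y => c x y))
    (hv : FiniteEnergy c v) (x : V) :
    Summable (fun y => c x y * (v x - v y)) := by
  rw [← summable_abs_iff]
  refine Summable.of_nonneg_of_le (fun y => abs_nonneg _) (fun y => ?_)
    ((((hdeg x).add (summable_slice hv x))).mul_left (1/2))
  have hc := hnonneg x y
  rw [abs_mul, abs_of_nonneg hc]
  have h2 := mul_nonneg hc (sq_nonneg (1 - |v x - v y|))
  have h3 : |v x - v y| ^ 2 = (v x - v y) ^ 2 := sq_abs _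
  nlinarith [abs_nonneg (v x - v y)]

/-- decomposition of the delta cross sum -/
lemma cross_delta (hsymm : ∀ x y, c x y = c y x) (x : V) (v : V → ℝ)
    (hlap : Summable (fun y => c x y * (v x - v y))) :
    Summable (fun p : V × V => c p.1 p.2 * (dd x p.1 - dd x p.2) * (v p.1 - v p.2)) ∧
    ∑' p : V × V, c p.1 p.2 * (dd x p.1 - dd x p.2) * (v p.1 - v p.2)
      = 2 * ∑' y, c x y * (v x - v y) := by
  classical
  set F : V × V → ℝ := fun p => c p.1 p.2 * (dd x p.1 - dd x p.2) * (v p.1 - v p.2) with hF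
  set Afn : V × V → ℝ := fun p => if p.1 = x then c x p.2 * (v x - v p.2) else 0 with hA
  set Bfn : V × V → ℝ := fun p => if p.2 = x ∧ p.1 ≠ x then c x p.1 * (v x - v p.1) else 0 with hB
  have hFAB : ∀ p, F p = Afn p + Bfn p := by
    rintro ⟨s, t⟩
    by_cases hs : s = x <;> by_cases ht : t = x <;>
      simp [hF, hA, hB, dd, hs, ht, hsymm s x] <;> ring
  have hinjA : Function.Injective (fun y : V => ((x, y) : V × V)) := by
    intro a b hab; exact congrArg Prod.snd hab
  have hinjB : Function.Injective (fun y : V => ((y, x) : V × V)) := by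
    intro a b hab; exact congrArg Prod.fst hab
  have hsuppA : ∀ p ∉ Set.range (fun y : V => ((x, y) : V × V)), Afn p = 0 := by
    rintro ⟨s, t⟩ hp
    simp only [hA]
    rw [if_neg]
    intro hs; exact hp ⟨t, by simp [hs.symm]⟩
  have hsuppB : ∀ p ∉ Set.range (fun y : V => ((y, x) : V × V)), Bfn p = 0 := by
    rintro ⟨s, t⟩ hp
    simp only [hB]
    rw [if_neg]
    rintro ⟨ht, -⟩; exact hp ⟨s, by simp [ht.symm]⟩
  have hAcomp : ∀ y, Afn ((fun y : V => ((x, y) : V × V)) y) = c x y * (v x - v y) := by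
    intro y; simp [hA]
  have hBcomp : ∀ y, Bfn ((fun y : V => ((y, x) : V × V)) y) = c x y * (v x - v y) := by
    intro y
    by_cases hy : y = x
    · simp [hB, hy]
    · simp [hB, hy]
  have hsumA : Summable Afn := by
    rw [← hinjA.summable_iff hsuppA]
    exact hlap.congr fun y => (hAcomp y).symm
  have hsumB : Summable Bfn := by
    rw [← hinjB.summable_iff hsuppB]
    exact hlap.congr fun y => (hBcomp y).symm
  have htA : ∑' p : V × V, Afn p = ∑' y, c x y * (v x - v y) := by
    rw [← hinjA.tsum_eq (fun p hp => by by_contra hc; exact hp (hsuppA p hc))]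
    exact tsum_congr hAcomp
  have htB : ∑' p : V × V, Bfn p = ∑' y, c x y * (v x - v y) := by
    rw [← hinjB.tsum_eq (fun p hp => by by_contra hc; exact hp (hsuppB p hc))]
    exact tsum_congr hBcomp
  constructor
  · exact (hsumA.add hsumB).congr fun p => (hFAB p).symm
  · calc ∑' p, F p = ∑' p, (Afn p + Bfn p) := tsum_congr hFAB
      _ = (∑' p, Afn p) + ∑' p, Bfn p := Summable.tsum_add hsumA hsumB
      _ = 2 * ∑' y, c x y * (v x - v y) := by rw [htA, htB]; ring

lemma einner_dd (hsymm : ∀ x y, c x y = c y x) (x : V)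
    (hlap : Summable (fun y => c x y * (v x - v y))) :
    einner c (dd x) v = ∑' y, c x y * (v x - v y) := by
  unfold einner
  rw [(cross_delta hsymm x v hlap).2]; ring

lemma fe_dd (hsymm : ∀ x y, c x y = c y x) (hnonneg : ∀ x y, 0 ≤ c x y)
    (hdeg : ∀ x, Summable (fun y => c x y)) (x : V) :
    FiniteEnergy c (dd x) := by
  have hlap : Summable (fun y => c x y * (dd x x - dd x y)) := by
    rw [← summable_abs_iff]
    refine Summable.of_nonneg_of_le (fun y => abs_nonneg _) (fun y => ?_) (hdeg x)
    have hc := hnonneg x y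
    rw [abs_mul, abs_of_nonneg hc]
    have : |dd x x - dd x y| ≤ 1 := by
      simp only [dd, if_pos rfl]
      by_cases hy : y = x <;> simp [hy]
    nlinarith [abs_nonneg (dd x x - dd x y)]
  have := (cross_delta hsymm x (dd x) hlap).1
  exact this.congr fun p => by ring

lemma fe_zero : FiniteEnergy c (fun _ => (0:ℝ)) := by
  show Summable _
  exact summable_zero.congr fun p => by simp

lemma einner_zero_left : einner c (fun _ => (0:ℝ)) v = 0 := by
  unfold einner
  have : (fun p : V × V => c p.1 p.2 * ((0:ℝ) - 0) * (v p.1 - v p.2)) = fun _ => (0:ℝ) := by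
    funext p; ring
  rw [this, tsum_zero]; ring

lemma fe_fsum (hnonneg : ∀ x y, 0 ≤ c x y) {ι : Type*} (s : Finset ι) (F : ι → V → ℝ)
    (hF : ∀ i, FiniteEnergy c (F i)) :
    FiniteEnergy c (fun z => ∑ i ∈ s, F i z) := by
  classical
  induction s using Finset.induction_on with
  | empty => exact (fe_zero (c := c)).congr fun p => by simp
  | @insert a t hnotmem ih =>
    have := fe_add hnonneg (hF a) ih
    exact this.congr fun p => by
      simp [Finset.sum_insert hnotmem]

lemma einner_fsum_left (hnonneg : ∀ x y, 0 ≤ c x y) {ι : Type*} (s : Finset ι) (F : ι → V → ℝ)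
    (hF : ∀ i, FiniteEnergy c (F i)) (hv : FiniteEnergy c v) :
    einner c (fun z => ∑ i ∈ s, F i z) v = ∑ i ∈ s, einner c (F i) v := by
  classical
  induction s using Finset.induction_on with
  | empty =>
    rw [show (fun z => ∑ i ∈ (∅ : Finset ι), F i z) = (fun _ => (0:ℝ)) by funext z; simp]
    rw [einner_zero_left, Finset.sum_empty]
  | @insert a s hnotmem ih =>
    have h1 : (fun z => ∑ i ∈ insert a s, F i z)
        = (fun z => F a z + ∑ i ∈ s, F i z) := by
      funext z; simp [Finset.sum_insert hnotmem]
    rw [h1, einner_add_left hnonneg (hF a) (fe_fsum hnonneg s F hF) hv, ih,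
      Finset.sum_insert hnotmem]

lemma finsupp_repr (g : V → ℝ) (hg : (Function.support g).Finite) (z : V) :
    g z = ∑ x ∈ hg.toFinset, g x * dd x z := by
  classical
  by_cases hz : z ∈ hg.toFinset
  · rw [Finset.sum_eq_single z]
    · simp [dd]
    · intro b _ hbz; simp [dd, hbz, Ne.symm hbz]
    · intro h; exact absurd hz h
  · have hz0 : g z = 0 := by
      by_contra h0
      exact hz (by simpa using h0)
    rw [hz0]
    refine (Finset.sum_eq_zero fun x hx => ?_).symm
    have hxz : z ≠ x := by
      rintro rfl
      exact hz hx
    simp [dd, hxz]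

lemma fe_finsupp (hsymm : ∀ x y, c x y = c y x) (hnonneg : ∀ x y, 0 ≤ c x y)
    (hdeg : ∀ x, Summable (fun y => c x y))
    (g : V → ℝ) (hg : (Function.support g).Finite) : FiniteEnergy c g := by
  classical
  have := fe_fsum hnonneg hg.toFinset (fun x => fun z => g x * dd x z)
    (fun x => fe_smul hnonneg (fe_dd hsymm hnonneg hdeg x) (g x))
  refine this.congr fun p => ?_
  show c p.1 p.2 * ((∑ i ∈ hg.toFinset, g i * dd i p.1) - ∑ i ∈ hg.toFinset, g i * dd i p.2) ^ 2
      = c p.1 p.2 * (g p.1 - g p.2) ^ 2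
  rw [← finsupp_repr g hg p.1, ← finsupp_repr g hg p.2]

lemma einner_finsupp_harmonic (hsymm : ∀ x y, c x y = c y x) (hnonneg : ∀ x y, 0 ≤ c x y)
    (hdeg : ∀ x, Summable (fun y => c x y))
    (g : V → ℝ) (hg : (Function.support g).Finite)
    (hh : FiniteEnergy c h) (hharm : Harmonic c h) :
    einner c g h = 0 := by
  classical
  have hrepr : g = fun z => ∑ x ∈ hg.toFinset, g x * dd x z := funext (finsupp_repr g hg)
  rw [hrepr, einner_fsum_left hnonneg hg.toFinset _
    (fun x => fe_smul hnonneg (fe_dd hsymm hnonneg hdeg x) (g x)) hh]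
  refine Finset.sum_eq_zero fun x _ => ?_
  rw [einner_smul_left, einner_dd hsymm x (hharm x).1, (hharm x).2, mul_zero]

/-- Part 2 of the theorem. -/
lemma ortho (hsymm : ∀ x y, c x y = c y x) (hnonneg : ∀ x y, 0 ≤ c x y)
    (hdeg : ∀ x, Summable (fun y => c x y))
    (hf : MemFinClosure c f) (hh : FiniteEnergy c h) (hharm : Harmonic c h) :
    einner c f h = 0 := by
  obtain ⟨hfe, happrox⟩ := hf
  have hEh := einner_nonneg hnonneg h
  have key : ∀ ε : ℝ, 0 < ε → (einner c f h)^2 ≤ ε * einner c h h := by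
    intro ε hε
    obtain ⟨g, hgfin, hglt⟩ := happrox ε hε
    have hgfe : FiniteEnergy c g := fe_finsupp hsymm hnonneg hdeg g hgfin
    have hsplit : einner c f h = einner c (fun z => f z - g z) h + einner c g h := by
      have h1 : f = fun z => (f z - g z) + g z := by funext z; ring
      conv_lhs => rw [h1]
      exact einner_add_left hnonneg (fe_sub hnonneg hfe hgfe) hgfe hh
    rw [einner_finsupp_harmonic hsymm hnonneg hdeg g hgfin hh hharm, add_zero] at hsplit
    rw [hsplit]
    have hcs := cs_sq hnonneg (fe_sub hnonneg hfe hgfe) hh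
    have : einner c (fun z => f z - g z) (fun z => f z - g z) * einner c h h
        ≤ ε * einner c h h := by
      apply mul_le_mul_of_nonneg_right (le_of_lt hglt) hEh
    linarith
  by_contra hne
  have hpos : 0 < (einner c f h)^2 := by positivity
  have hden : (0:ℝ) < 2 * (einner c h h + 1) := by positivity
  have hkey := key ((einner c f h)^2 / (2 * (einner c h h + 1))) (by positivity)
  have h4 := mul_le_mul_of_nonneg_right hkey (le_of_lt hden)
  have h5 : (einner c f h)^2 / (2 * (einner c h h + 1)) * einner c h h * (2 * (einner c h h + 1))
      = (einner c f h)^2 * einner c h h := by field_simp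
  rw [h5] at h4
  nlinarith [h4, hpos, hEh]

lemma edge_bound (hu' : FiniteEnergy c u) (hnonneg : ∀ x y, 0 ≤ c x y) (a b : V) :
    c a b * (u a - u b)^2 ≤ 2 * einner c u u := by
  have h1 : c a b * (u a - u b)^2 ≤ ∑' p : V × V, c p.1 p.2 * (u p.1 - u p.2)^2 := by
    have := Summable.le_tsum hu' (a, b) (fun p _ => mul_nonneg (hnonneg p.1 p.2) (sq_nonneg _))
    exact this
  have h2 : ∑' p : V × V, c p.1 p.2 * (u p.1 - u p.2)^2
      = ∑' p : V × V, c p.1 p.2 * (u p.1 - u p.2) * (u p.1 - u p.2) :=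
    tsum_congr fun p => by ring
  unfold einner
  rw [← h2] at *
  linarith

lemma const_of_zero_energy (hnonneg : ∀ x y, 0 ≤ c x y)
    (hconn : ∀ x y : V, Relation.ReflTransGen (fun a b => 0 < c a b) x y)
    (hu' : FiniteEnergy c u) (hE : einner c u u = 0) (a b : V) : u a = u b := by
  have h := hconn a b
  induction h with
  | refl => rfl
  | @tail s t hst hedge ih =>
    have := edge_bound hu' hnonneg s t
    rw [hE] at this
    have h2 : (u s - u t)^2 ≤ 0 := by
      by_contra hc
      push_neg at hc
      nlinarith [hedge]
    have h3 : u s = u t := by nlinarith [sq_nonneg (u s - u t)]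
    rw [← h3, ih]

lemma mfc_sub (hsymm : ∀ x y, c x y = c y x) (hnonneg : ∀ x y, 0 ≤ c x y)
    (hdeg : ∀ x, Summable (fun y => c x y))
    (hf : MemFinClosure c f) (hg : MemFinClosure c g) :
    MemFinClosure c (fun z => f z - g z) := by
  obtain ⟨hfe, hfa⟩ := hf
  obtain ⟨hge, hga⟩ := hg
  refine ⟨fe_sub hnonneg hfe hge, fun ε hε => ?_⟩
  obtain ⟨a, hafin, halt⟩ := hfa (ε/4) (by positivity)
  obtain ⟨b, hbfin, hblt⟩ := hga (ε/4) (by positivity)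
  refine ⟨fun z => a z - b z, (hafin.union hbfin).subset ?_, ?_⟩
  · intro z hz
    simp only [Function.mem_support] at hz ⊢
    by_contra hc
    simp only [Set.mem_union, Function.mem_support, not_or, not_not] at hc
    exact hz (by rw [hc.1, hc.2]; ring)
  · have hafe : FiniteEnergy c a := fe_finsupp hsymm hnonneg hdeg a hafin
    have hbfe : FiniteEnergy c b := fe_finsupp hsymm hnonneg hdeg b hbfin
    set A : V → ℝ := fun z => f z - a z with hA
    set B : V → ℝ := fun z => g z - b z with hB
    have hAfe : FiniteEnergy c A := fe_sub hnonneg hfe hafe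
    have hBfe : FiniteEnergy c B := fe_sub hnonneg hge hbfe
    have hBfe' : FiniteEnergy c (fun z => -1 * B z) := fe_smul hnonneg hBfe (-1)
    have heq : (fun z => (f z - g z) - (a z - b z)) = (fun z => A z + (-1) * B z) := by
      funext z; simp [hA, hB]; ring
    rw [heq]
    have htri := sqrt_triangle hnonneg hAfe hBfe'
    have hBneg : einner c (fun z => -1 * B z) (fun z => -1 * B z) = einner c B B := by
      rw [einner_smul_left]
      rw [show (fun z => -1 * B z) = (fun z => (-1:ℝ) * B z) from rfl]
      conv_lhs => rw [einner_comm, einner_smul_left]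
      rw [einner_comm]; ring
    rw [hBneg] at htri
    have hAnn := einner_nonneg hnonneg A
    have hBnn := einner_nonneg hnonneg B
    have hEnn := einner_nonneg hnonneg (fun z => A z + (-1) * B z)
    have hsa : Real.sqrt (einner c A A) < Real.sqrt (ε/4) := Real.sqrt_lt_sqrt hAnn halt
    have hsb : Real.sqrt (einner c B B) < Real.sqrt (ε/4) := Real.sqrt_lt_sqrt hBnn hblt
    have hsq : Real.sqrt (einner c (fun z => A z + (-1) * B z) (fun z => A z + (-1) * B z))
        < 2 * Real.sqrt (ε/4) := by linarith
    have h1 := Real.sq_sqrt hEnn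
    have h2 := Real.sq_sqrt (show (0:ℝ) ≤ ε/4 by positivity)
    nlinarith [Real.sqrt_nonneg (einner c (fun z => A z + (-1) * B z) (fun z => A z + (-1) * B z)),
      Real.sqrt_nonneg (ε/4)]

lemma path_bound (hnonneg : ∀ x y, 0 ≤ c x y)
    (hconn : ∀ x y : V, Relation.ReflTransGen (fun a b => 0 < c a b) x y) (a b : V) :
    ∃ C : ℝ, 0 ≤ C ∧ ∀ w : V → ℝ, FiniteEnergy c w →
      |w a - w b| ≤ C * Real.sqrt (einner c w w) := by
  have h := hconn a b
  induction h with
  | refl => exact ⟨0, le_refl _, fun w _ => by simp⟩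
  | @tail s t hst hedge ih =>
    obtain ⟨C, hC0, hC⟩ := ih
    refine ⟨C + Real.sqrt (2 / c s t), by positivity, fun w hw => ?_⟩
    have h1 := hC w hw
    have hEnn := einner_nonneg hnonneg w
    have hedge' := edge_bound hw hnonneg s t
    have hcpos : 0 < c s t := hedge
    have h2 : (w s - w t)^2 ≤ (2 / c s t) * einner c w w := by
      rw [div_mul_eq_mul_div, le_div_iff₀ hcpos]
      nlinarith
    have h3 : |w s - w t| ≤ Real.sqrt ((2 / c s t) * einner c w w) := by
      rw [← Real.sqrt_sq_eq_abs]
      exact Real.sqrt_le_sqrt h2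
    rw [Real.sqrt_mul (by positivity)] at h3
    calc |w a - w t| ≤ |w a - w s| + |w s - w t| := by
          have : w a - w t = (w a - w s) + (w s - w t) := by ring
          rw [this]; exact abs_add_le _ _
      _ ≤ C * Real.sqrt (einner c w w) + Real.sqrt (2 / c s t) * Real.sqrt (einner c w w) := by
          linarith
      _ = (C + Real.sqrt (2 / c s t)) * Real.sqrt (einner c w w) := by ring

lemma fe_of_eq (h : ∀ z, u z = v z) (hu : FiniteEnergy c u) : FiniteEnergy c v :=
  hu.congr fun p => by rw [h p.1, h p.2]

lemma tsum_sq (c : V → V → ℝ) (w : V → ℝ) :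
    ∑' p : V × V, c p.1 p.2 * (w p.1 - w p.2)^2 = 2 * einner c w w := by
  unfold einner
  rw [show (fun p : V × V => c p.1 p.2 * (w p.1 - w p.2)^2)
    = fun p : V × V => c p.1 p.2 * (w p.1 - w p.2) * (w p.1 - w p.2) from funext fun p => by ring]
  ring

lemma einner_neg_sym (p q : V → ℝ) :
    einner c (fun z => p z - q z) (fun z => p z - q z)
      = einner c (fun z => q z - p z) (fun z => q z - p z) := by
  unfold einner; congr 1; exact tsum_congr fun r => by ring

open Filter Topology in
set_option maxHeartbeats 1000000 in
lemma exists_decomp (hsymm : ∀ x y, c x y = c y x) (hnonneg : ∀ x y, 0 ≤ c x y)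
    (hdeg : ∀ x, Summable (fun y => c x y))
    (hconn : ∀ x y : V, Relation.ReflTransGen (fun a b => 0 < c a b) x y)
    (u : V → ℝ) (hu : FiniteEnergy c u) (hV : Nonempty V) :
    ∃ f h : V → ℝ, MemFinClosure c f ∧ FiniteEnergy c h ∧ Harmonic c h ∧
      ∀ x, u x = f x + h x := by
  classical
  obtain ⟨o⟩ := hV
  set S : Set ℝ := {r | ∃ g : V → ℝ, (Function.support g).Finite ∧
    einner c (fun z => u z - g z) (fun z => u z - g z) = r} with hS
  have hSne : S.Nonempty := by
    refine ⟨einner c (fun z => u z - (fun _ : V => (0:ℝ)) z)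
      (fun z => u z - (fun _ : V => (0:ℝ)) z), ⟨fun _ => 0, ?_, rfl⟩⟩
    have hz : Function.support (fun _ : V => (0:ℝ)) = ∅ :=
      Function.support_eq_empty_iff.mpr rfl
    rw [hz]
    exact Set.finite_empty
  have hSnn : ∀ r ∈ S, 0 ≤ r := by rintro r ⟨g, -, rfl⟩; exact einner_nonneg hnonneg _
  have hbdd : BddBelow S := ⟨0, fun r hr => hSnn r hr⟩
  set d : ℝ := sInf S with hd
  have hd0 : 0 ≤ d := le_csInf hSne hSnn
  have hdle : ∀ g : V → ℝ, (Function.support g).Finite →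
      d ≤ einner c (fun z => u z - g z) (fun z => u z - g z) :=
    fun g hg => csInf_le hbdd ⟨g, hg, rfl⟩
  have hseq : ∀ n : ℕ, ∃ g : V → ℝ, (Function.support g).Finite ∧
      einner c (fun z => u z - g z) (fun z => u z - g z) < d + 1/((n:ℝ)+1) := by
    intro n
    have hlt : d < d + 1/((n:ℝ)+1) := lt_add_of_pos_right _ (by positivity)
    obtain ⟨r, hrS, hrlt⟩ := exists_lt_of_csInf_lt hSne hlt
    obtain ⟨g, hgfin, rfl⟩ := hrS
    exact ⟨g, hgfin, hrlt⟩
  choose g hgfin hglt using hseq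
  have hgfe : ∀ n, FiniteEnergy c (g n) := fun n =>
    fe_finsupp hsymm hnonneg hdeg _ (hgfin n)
  have hafe : ∀ n, FiniteEnergy c (fun z => u z - g n z) := fun n =>
    fe_sub hnonneg hu (hgfe n)
  -- quantitative Cauchy estimate from the parallelogram law
  have hkey : ∀ n m : ℕ, einner c (fun z => g n z - g m z) (fun z => g n z - g m z)
      ≤ 2/((n:ℝ)+1) + 2/((m:ℝ)+1) := by
    intro n m
    have hmidfin : (Function.support (fun z => (g n z + g m z)/2)).Finite := by
      refine ((hgfin n).union (hgfin m)).subset ?_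
      intro z hz
      simp only [Function.mem_support, Set.mem_union] at hz ⊢
      by_contra hcon
      push_neg at hcon
      exact hz (by rw [hcon.1, hcon.2]; ring)
    have hdmid : d ≤ einner c (fun z => (1/2) * (u z - g n z) + (1/2) * (u z - g m z))
        (fun z => (1/2) * (u z - g n z) + (1/2) * (u z - g m z)) := by
      have h0 : d ≤ einner c (fun z => u z - (g n z + g m z)/2)
          (fun z => u z - (g n z + g m z)/2) := hdle _ hmidfin
      rwa [show (fun z => u z - (g n z + g m z)/2)
        = (fun z => (1/2) * (u z - g n z) + (1/2) * (u z - g m z))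
        from funext fun z => by ring] at h0
    have hexp1 : einner c (fun z => (1/2) * (u z - g n z) + (1/2) * (u z - g m z))
        (fun z => (1/2) * (u z - g n z) + (1/2) * (u z - g m z))
        = (1/2)*(1/2) * einner c (fun z => u z - g n z) (fun z => u z - g n z)
          + 2*((1/2)*(1/2)) * einner c (fun z => u z - g n z) (fun z => u z - g m z)
          + (1/2)*(1/2) * einner c (fun z => u z - g m z) (fun z => u z - g m z) :=
      expand2 hnonneg (hafe n) (hafe m) (1/2) (1/2)
    have hexp2 : einner c (fun z => (-1) * (u z - g n z) + 1 * (u z - g m z))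
        (fun z => (-1) * (u z - g n z) + 1 * (u z - g m z))
        = (-1)*(-1) * einner c (fun z => u z - g n z) (fun z => u z - g n z)
          + 2*((-1)*1) * einner c (fun z => u z - g n z) (fun z => u z - g m z)
          + 1*1 * einner c (fun z => u z - g m z) (fun z => u z - g m z) :=
      expand2 hnonneg (hafe n) (hafe m) (-1) 1
    have hgoal : einner c (fun z => g n z - g m z) (fun z => g n z - g m z)
        = einner c (fun z => (-1) * (u z - g n z) + 1 * (u z - g m z))
          (fun z => (-1) * (u z - g n z) + 1 * (u z - g m z)) := by
      rw [show (fun z => g n z - g m z)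
        = (fun z => (-1) * (u z - g n z) + 1 * (u z - g m z)) from funext fun z => by ring]
    rw [hgoal, hexp2]
    rw [hexp1] at hdmid
    have h1 := hglt n
    have h2 := hglt m
    have e1 : 2/((n:ℝ)+1) = 2 * (1/((n:ℝ)+1)) := by ring
    have e2 : 2/((m:ℝ)+1) = 2 * (1/((m:ℝ)+1)) := by ring
    linarith
  have hgdiff_fe : ∀ n m : ℕ, FiniteEnergy c (fun z => g n z - g m z) := fun n m =>
    fe_sub hnonneg (hgfe n) (hgfe m)
  -- pointwise Cauchy sequences
  have hCx := fun x => path_bound hnonneg hconn x o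
  choose C hC0 hC using hCx
  have hb0 : Tendsto (fun N : ℕ => Real.sqrt (4/((N:ℝ)+1))) atTop (𝓝 0) := by
    have h1 : Tendsto (fun N : ℕ => 4/((N:ℝ)+1)) atTop (𝓝 0) := by
      have h2 := tendsto_one_div_add_atTop_nhds_zero_nat.const_mul (4:ℝ)
      simpa [mul_one_div, div_eq_mul_inv] using h2
    have h3 := (Real.continuous_sqrt.tendsto 0).comp h1
    rw [Real.sqrt_zero] at h3
    exact h3
  have hmono4 : ∀ n m N : ℕ, N ≤ n → N ≤ m →
      einner c (fun z => g n z - g m z) (fun z => g n z - g m z) ≤ 4/((N:ℝ)+1) := by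
    intro n m N hn hm
    refine le_trans (hkey n m) ?_
    have hNn : ((N:ℝ)+1) ≤ ((n:ℝ)+1) := by exact_mod_cast Nat.succ_le_succ hn
    have hNm : ((N:ℝ)+1) ≤ ((m:ℝ)+1) := by exact_mod_cast Nat.succ_le_succ hm
    have h1 : 2/((n:ℝ)+1) ≤ 2/((N:ℝ)+1) :=
      div_le_div_of_nonneg_left (by norm_num) (by positivity) hNn
    have h2 : 2/((m:ℝ)+1) ≤ 2/((N:ℝ)+1) :=
      div_le_div_of_nonneg_left (by norm_num) (by positivity) hNm
    have h3 : 4/((N:ℝ)+1) = 2/((N:ℝ)+1) + 2/((N:ℝ)+1) := by ring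
    linarith
  have hcs : ∀ x : V, CauchySeq (fun n => g n x - g n o) := by
    intro x
    refine cauchySeq_of_le_tendsto_0 (fun N => C x * Real.sqrt (4/((N:ℝ)+1))) ?_ ?_
    · intro n m N hn hm
      have hw := hC x (fun z => g n z - g m z) (hgdiff_fe n m)
      have hde : dist (g n x - g n o) (g m x - g m o)
          = |(fun z => g n z - g m z) x - (fun z => g n z - g m z) o| := by
        rw [Real.dist_eq]
        exact congrArg abs (by ring)
      rw [hde]
      refine le_trans hw ?_
      refine mul_le_mul_of_nonneg_left ?_ (hC0 x)
      exact Real.sqrt_le_sqrt (hmono4 n m N hn hm)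
    · simpa using hb0.const_mul (C x)
  have hlim : ∀ x : V, ∃ L : ℝ, Tendsto (fun n => g n x - g n o) atTop (𝓝 L) :=
    fun x => cauchySeq_tendsto_of_complete (hcs x)
  choose f hf using hlim
  -- energy bound for f - g n via Fatou on finite sums
  have hT : ∀ n : ℕ, ∀ F : Finset (V × V),
      ∑ p ∈ F, c p.1 p.2 * ((f p.1 - g n p.1) - (f p.2 - g n p.2))^2 ≤ 4/((n:ℝ)+1) := by
    intro n F
    have hterm : ∀ p : V × V,
        Tendsto (fun m => c p.1 p.2 * ((g m p.1 - g n p.1) - (g m p.2 - g n p.2))^2)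
          atTop (𝓝 (c p.1 p.2 * ((f p.1 - g n p.1) - (f p.2 - g n p.2))^2)) := by
      intro p
      have h3 : Tendsto (fun m => (g m p.1 - g m o) - (g m p.2 - g m o)) atTop
          (𝓝 (f p.1 - f p.2)) := (hf p.1).sub (hf p.2)
      have h4 : Tendsto (fun m => ((g m p.1 - g m o) - (g m p.2 - g m o)) - (g n p.1 - g n p.2))
          atTop (𝓝 ((f p.1 - f p.2) - (g n p.1 - g n p.2))) := h3.sub tendsto_const_nhds
      have h5 := (h4.mul h4).const_mul (c p.1 p.2)
      have hfun : (fun m => c p.1 p.2 * ((g m p.1 - g n p.1) - (g m p.2 - g n p.2))^2)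
          = fun m => c p.1 p.2 * (((((g m p.1 - g m o) - (g m p.2 - g m o)) - (g n p.1 - g n p.2)))
            * ((((g m p.1 - g m o) - (g m p.2 - g m o)) - (g n p.1 - g n p.2)))) :=
        funext fun m => by ring
      have hval : c p.1 p.2 * ((f p.1 - g n p.1) - (f p.2 - g n p.2))^2
          = c p.1 p.2 * (((f p.1 - f p.2) - (g n p.1 - g n p.2))
            * ((f p.1 - f p.2) - (g n p.1 - g n p.2))) := by ring
      rw [hfun, hval]
      exact h5
    have hsum := tendsto_finset_sum F (fun p _ => hterm p)
    have hbound : ∀ m : ℕ, ∑ p ∈ F, c p.1 p.2 * ((g m p.1 - g n p.1) - (g m p.2 - g n p.2))^2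
        ≤ 2 * (2/((m:ℝ)+1) + 2/((n:ℝ)+1)) := by
      intro m
      have hfe := hgdiff_fe m n
      have h1 : ∑ p ∈ F, c p.1 p.2 * ((g m p.1 - g n p.1) - (g m p.2 - g n p.2))^2
          ≤ ∑' p : V × V, c p.1 p.2 * ((g m p.1 - g n p.1) - (g m p.2 - g n p.2))^2 :=
        Summable.sum_le_tsum F (fun p _ => mul_nonneg (hnonneg p.1 p.2) (sq_nonneg _)) hfe
      have h2 : ∑' p : V × V, c p.1 p.2 * ((g m p.1 - g n p.1) - (g m p.2 - g n p.2))^2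
          = 2 * einner c (fun z => g m z - g n z) (fun z => g m z - g n z) :=
        tsum_sq c (fun z => g m z - g n z)
      rw [h2] at h1
      have h3 := hkey m n
      linarith
    have hlimbound : Tendsto (fun m : ℕ => 2 * (2/((m:ℝ)+1) + 2/((n:ℝ)+1))) atTop
        (𝓝 (2 * (0 + 2/((n:ℝ)+1)))) := by
      have h1 : Tendsto (fun m : ℕ => 2/((m:ℝ)+1)) atTop (𝓝 0) := by
        have h2 := tendsto_one_div_add_atTop_nhds_zero_nat.const_mul (2:ℝ)
        simpa [mul_one_div, div_eq_mul_inv] using h2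
      exact (h1.add tendsto_const_nhds).const_mul 2
    have hfin := le_of_tendsto_of_tendsto' hsum hlimbound hbound
    calc ∑ p ∈ F, c p.1 p.2 * ((f p.1 - g n p.1) - (f p.2 - g n p.2))^2
        ≤ 2 * (0 + 2/((n:ℝ)+1)) := hfin
      _ = 4/((n:ℝ)+1) := by ring
  have hfnfe : ∀ n : ℕ, FiniteEnergy c (fun z => f z - g n z) := by
    intro n
    show Summable _
    exact summable_of_sum_le (fun p => mul_nonneg (hnonneg p.1 p.2) (sq_nonneg _)) (hT n)
  have hEfn : ∀ n : ℕ, einner c (fun z => f z - g n z) (fun z => f z - g n z)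
      ≤ 2/((n:ℝ)+1) := by
    intro n
    have h1 : ∑' p : V × V, c p.1 p.2 * ((f p.1 - g n p.1) - (f p.2 - g n p.2))^2
        ≤ 4/((n:ℝ)+1) := Summable.tsum_le_of_sum_le (hfnfe n) (hT n)
    have h2 : ∑' p : V × V, c p.1 p.2 * ((f p.1 - g n p.1) - (f p.2 - g n p.2))^2
        = 2 * einner c (fun z => f z - g n z) (fun z => f z - g n z) :=
      tsum_sq c (fun z => f z - g n z)
    rw [h2] at h1
    have h3 : 4/((n:ℝ)+1) = 2 * (2/((n:ℝ)+1)) := by ring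
    linarith
  have hffe : FiniteEnergy c f :=
    fe_of_eq (fun z => show f z - g 0 z + g 0 z = f z by ring)
      (fe_add hnonneg (hfnfe 0) (hgfe 0))
  have hufe : FiniteEnergy c (fun z => u z - f z) := fe_sub hnonneg hu hffe
  have hEA0 : ∀ (t : ℝ) (φ : V → ℝ), 0 ≤ einner c (fun z => (u z - f z) - t * φ z)
      (fun z => (u z - f z) - t * φ z) := fun t φ => einner_nonneg hnonneg _
  have hsq2 : Tendsto (fun n : ℕ => Real.sqrt (2/((n:ℝ)+1))) atTop (𝓝 0) := by
    have h1 : Tendsto (fun n : ℕ => 2/((n:ℝ)+1)) atTop (𝓝 0) := by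
      have h2 := tendsto_one_div_add_atTop_nhds_zero_nat.const_mul (2:ℝ)
      simpa [mul_one_div, div_eq_mul_inv] using h2
    have h3 := (Real.continuous_sqrt.tendsto 0).comp h1
    rw [Real.sqrt_zero] at h3
    exact h3
  -- minimality: the energy of (u - f) - tφ is at least d for finitely supported φ
  have hmin : ∀ φ : V → ℝ, (Function.support φ).Finite → ∀ t : ℝ,
      d ≤ einner c (fun z => (u z - f z) - t * φ z) (fun z => (u z - f z) - t * φ z) := by
    intro φ hφ t
    have hφfe : FiniteEnergy c φ := fe_finsupp hsymm hnonneg hdeg φ hφ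
    have hAfe : FiniteEnergy c (fun z => (u z - f z) - t * φ z) :=
      fe_sub hnonneg hufe (fe_smul hnonneg hφfe t)
    have key : ∀ n : ℕ, Real.sqrt d
        ≤ Real.sqrt (einner c (fun z => (u z - f z) - t * φ z)
            (fun z => (u z - f z) - t * φ z)) + Real.sqrt (2/((n:ℝ)+1)) := by
      intro n
      have hgnfin : (Function.support (fun z => g n z + t * φ z)).Finite := by
        refine ((hgfin n).union hφ).subset ?_
        intro z hz
        simp only [Function.mem_support, Set.mem_union] at hz ⊢
        by_contra hcon
        push_neg at hcon
        exact hz (by rw [hcon.1, hcon.2]; ring)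
      have h1 : d ≤ einner c (fun z => ((u z - f z) - t * φ z) + (f z - g n z))
          (fun z => ((u z - f z) - t * φ z) + (f z - g n z)) := by
        have h0 : d ≤ einner c (fun z => u z - (g n z + t * φ z))
            (fun z => u z - (g n z + t * φ z)) := hdle _ hgnfin
        rwa [show (fun z => u z - (g n z + t * φ z))
          = (fun z => ((u z - f z) - t * φ z) + (f z - g n z))
          from funext fun z => by ring] at h0
      have htri : Real.sqrt (einner c (fun z => ((u z - f z) - t * φ z) + (f z - g n z))
            (fun z => ((u z - f z) - t * φ z) + (f z - g n z)))
          ≤ Real.sqrt (einner c (fun z => (u z - f z) - t * φ z)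
              (fun z => (u z - f z) - t * φ z))
            + Real.sqrt (einner c (fun z => f z - g n z) (fun z => f z - g n z)) :=
        sqrt_triangle hnonneg hAfe (hfnfe n)
      have hs1 := Real.sqrt_le_sqrt h1
      have hs2 : Real.sqrt (einner c (fun z => f z - g n z) (fun z => f z - g n z))
          ≤ Real.sqrt (2/((n:ℝ)+1)) := Real.sqrt_le_sqrt (hEfn n)
      linarith
    have hlim2 : Tendsto (fun n : ℕ => Real.sqrt (einner c (fun z => (u z - f z) - t * φ z)
          (fun z => (u z - f z) - t * φ z)) + Real.sqrt (2/((n:ℝ)+1))) atTop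
        (𝓝 (Real.sqrt (einner c (fun z => (u z - f z) - t * φ z)
          (fun z => (u z - f z) - t * φ z)) + 0)) := tendsto_const_nhds.add hsq2
    have hsd := ge_of_tendsto' hlim2 key
    rw [add_zero] at hsd
    nlinarith [Real.sq_sqrt hd0, Real.sq_sqrt (hEA0 t φ), Real.sqrt_nonneg d,
      Real.sqrt_nonneg (einner c (fun z => (u z - f z) - t * φ z)
        (fun z => (u z - f z) - t * φ z))]
  -- E(u - f) ≤ d
  have hEh_le : einner c (fun z => u z - f z) (fun z => u z - f z) ≤ d := by
    have hE0 := einner_nonneg hnonneg (fun z => u z - f z)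
    have key : ∀ n : ℕ, Real.sqrt (einner c (fun z => u z - f z) (fun z => u z - f z))
        ≤ Real.sqrt (d + 1/((n:ℝ)+1)) + Real.sqrt (2/((n:ℝ)+1)) := by
      intro n
      have htri : Real.sqrt (einner c (fun z => (u z - g n z) + (g n z - f z))
            (fun z => (u z - g n z) + (g n z - f z)))
          ≤ Real.sqrt (einner c (fun z => u z - g n z) (fun z => u z - g n z))
            + Real.sqrt (einner c (fun z => g n z - f z) (fun z => g n z - f z)) :=
        sqrt_triangle hnonneg (hafe n) (fe_sub hnonneg (hgfe n) hffe)
      have he : einner c (fun z => u z - f z) (fun z => u z - f z)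
          = einner c (fun z => (u z - g n z) + (g n z - f z))
            (fun z => (u z - g n z) + (g n z - f z)) := by
        rw [show (fun z => u z - f z) = (fun z => (u z - g n z) + (g n z - f z))
          from funext fun z => by ring]
      have hsym : einner c (fun z => g n z - f z) (fun z => g n z - f z)
          = einner c (fun z => f z - g n z) (fun z => f z - g n z) := einner_neg_sym _ _
      have hs1 : Real.sqrt (einner c (fun z => u z - g n z) (fun z => u z - g n z))
          ≤ Real.sqrt (d + 1/((n:ℝ)+1)) := Real.sqrt_le_sqrt (le_of_lt (hglt n))
      have hs2 : Real.sqrt (einner c (fun z => g n z - f z) (fun z => g n z - f z))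
          ≤ Real.sqrt (2/((n:ℝ)+1)) := by
        rw [hsym]; exact Real.sqrt_le_sqrt (hEfn n)
      rw [he]
      linarith
    have hd1 : Tendsto (fun n : ℕ => d + 1/((n:ℝ)+1)) atTop (𝓝 (d + 0)) :=
      tendsto_const_nhds.add tendsto_one_div_add_atTop_nhds_zero_nat
    have hsqd : Tendsto (fun n : ℕ => Real.sqrt (d + 1/((n:ℝ)+1))) atTop (𝓝 (Real.sqrt d)) := by
      have h5 := (Real.continuous_sqrt.tendsto (d + 0)).comp hd1
      rw [add_zero] at h5
      exact h5
    have hlim2 : Tendsto (fun n : ℕ => Real.sqrt (d + 1/((n:ℝ)+1)) + Real.sqrt (2/((n:ℝ)+1)))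
        atTop (𝓝 (Real.sqrt d + 0)) := hsqd.add hsq2
    have hsd := ge_of_tendsto' hlim2 key
    rw [add_zero] at hsd
    nlinarith [Real.sq_sqrt hd0, Real.sq_sqrt hE0, Real.sqrt_nonneg d,
      Real.sqrt_nonneg (einner c (fun z => u z - f z) (fun z => u z - f z))]
  -- orthogonality to all finitely supported φ
  have horth : ∀ φ : V → ℝ, (Function.support φ).Finite →
      einner c (fun z => u z - f z) φ = 0 := by
    intro φ hφ
    have hφfe := fe_finsupp hsymm hnonneg hdeg φ hφ
    have hq : ∀ x : ℝ, 0 ≤ einner c φ φ * (x*x)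
        + (-2 * einner c (fun z => u z - f z) φ) * x + 0 := by
      intro x
      have h1 := hmin φ hφ x
      have he : einner c (fun z => (u z - f z) - x * φ z) (fun z => (u z - f z) - x * φ z)
          = einner c (fun z => 1 * (u z - f z) + (-x) * φ z)
            (fun z => 1 * (u z - f z) + (-x) * φ z) := by
        rw [show (fun z => (u z - f z) - x * φ z)
          = (fun z => 1 * (u z - f z) + (-x) * φ z) from funext fun z => by ring]
      have hexp : einner c (fun z => 1 * (u z - f z) + (-x) * φ z)
          (fun z => 1 * (u z - f z) + (-x) * φ z)
          = 1*1 * einner c (fun z => u z - f z) (fun z => u z - f z)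
            + 2*(1*(-x)) * einner c (fun z => u z - f z) φ
            + (-x)*(-x) * einner c φ φ := expand2 hnonneg hufe hφfe 1 (-x)
      rw [he, hexp] at h1
      nlinarith [h1, hEh_le]
    have hd2 := discrim_le_zero hq
    rw [discrim] at hd2
    nlinarith [hd2]
  refine ⟨f, fun z => u z - f z, ⟨hffe, ?_⟩, hufe, ?_, fun x => by ring⟩
  · intro ε hε
    obtain ⟨n, hn⟩ := exists_nat_gt (2/ε)
    refine ⟨g n, hgfin n, lt_of_le_of_lt (hEfn n) ?_⟩
    rw [div_lt_iff₀ (by positivity)]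
    have h2 : 2/ε < (n:ℝ) := hn
    have h3 : 2/ε * ε = 2 := by field_simp
    nlinarith [hε]
  · intro x
    have hlap := summable_lap hnonneg hdeg hufe x
    refine ⟨hlap, ?_⟩
    have hddfin : (Function.support (dd x)).Finite := by
      refine (Set.finite_singleton x).subset ?_
      intro z hz
      rcases eq_or_ne z x with rfl | hne
      · exact Set.mem_singleton _
      · exact absurd (by simp [dd, hne]) hz
    have h0 := horth (dd x) hddfin
    have h1 : einner c (dd x) (fun z => u z - f z) = 0 := by rw [einner_comm]; exact h0
    have h2 := einner_dd (c := c) (v := fun z => u z - f z) hsymm x hlap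
    rw [← h2]
    exact h1

end RoydenAux

/-- Royden decomposition `H_E = Fin ⊕ Harm`: every finite-energy
function is, uniquely up to an additive constant, the sum of an element of the
energy-closure of the finitely supported functions and a finite-energy harmonic
function, and these two subspaces are orthogonal in the energy inner product. -/
theorem royden_decomposition {V : Type*}
    (c : V → V → ℝ)
    (hsymm : ∀ x y, c x y = c y x)
    (hnonneg : ∀ x y, 0 ≤ c x y)
    (hloop : ∀ x, c x x = 0)
    (hdeg : ∀ x, Summable (fun y => c x y))
    (hconn : ∀ x y : V, Relation.ReflTransGen (fun a b => 0 < c a b) x y)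
    (u : V → ℝ) (hu : FiniteEnergy c u) :
    (∃ f h : V → ℝ, MemFinClosure c f ∧ FiniteEnergy c h ∧ Harmonic c h ∧
        ∀ x, u x = f x + h x) ∧
    (∀ f h : V → ℝ, MemFinClosure c f → FiniteEnergy c h → Harmonic c h →
        einner c f h = 0) ∧
    (∀ f h f' h' : V → ℝ,
        MemFinClosure c f → FiniteEnergy c h → Harmonic c h → (∀ x, u x = f x + h x) →
        MemFinClosure c f' → FiniteEnergy c h' → Harmonic c h' → (∀ x, u x = f' x + h' x) →
        ∃ k : ℝ, ∀ x, f' x = f x + k) := by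
  classical
  have part2 : ∀ f h : V → ℝ, MemFinClosure c f → FiniteEnergy c h → Harmonic c h →
      einner c f h = 0 := fun f h hf hh hharm =>
    RoydenAux.ortho hsymm hnonneg hdeg hf hh hharm
  refine ⟨?_, part2, ?_⟩
  · -- existence of a decomposition
    rcases isEmpty_or_nonempty V with hV | hV
    · refine ⟨u, fun _ => 0, ⟨hu, fun ε hε => ⟨u, ?_, ?_⟩⟩, RoydenAux.fe_zero,
        fun x => isEmptyElim x, fun x => by ring⟩
      · have h1 : Function.support u = ∅ := by
          ext z; exact isEmptyElim z
        rw [h1]; exact Set.finite_empty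
      · rw [show (fun z => u z - u z) = (fun _ : V => (0:ℝ)) from funext fun z => by ring]
        rw [RoydenAux.einner_zero_left]
        exact hε
    · exact RoydenAux.exists_decomp hsymm hnonneg hdeg hconn u hu hV
  · -- uniqueness up to an additive constant
    intro f h f' h' hf hh hharm hsum hf' hh' hharm' hsum'
    have hwclos : MemFinClosure c (fun z => f' z - f z) :=
      RoydenAux.mfc_sub hsymm hnonneg hdeg hf' hf
    have hwharm : Harmonic c (fun z => f' z - f z) := by
      have hwe : (fun z => f' z - f z) = (fun z => h z - h' z) := by
        funext z
        have e1 := hsum z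
        have e2 := hsum' z
        linarith
      rw [hwe]
      intro x
      refine ⟨Summable.congr ((hharm x).1.sub (hharm' x).1) fun y => ?_, ?_⟩
      · show c x y * (h x - h y) - c x y * (h' x - h' y)
          = c x y * ((h x - h' x) - (h y - h' y))
        ring
      · show (∑' y, c x y * ((h x - h' x) - (h y - h' y))) = 0
        have e : (fun y => c x y * ((h x - h' x) - (h y - h' y)))
            = fun y => c x y * (h x - h y) - c x y * (h' x - h' y) :=
          funext fun y => by ring
        rw [e, Summable.tsum_sub (hharm x).1 (hharm' x).1, (hharm x).2, (hharm' x).2, sub_zero]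
    have hwE : einner c (fun z => f' z - f z) (fun z => f' z - f z) = 0 :=
      part2 _ _ hwclos hwclos.1 hwharm
    have hconst := RoydenAux.const_of_zero_energy hnonneg hconn hwclos.1 hwE
    rcases isEmpty_or_nonempty V with hV | hV
    · exact ⟨0, fun x => isEmptyElim x⟩
    · obtain ⟨o⟩ := hV
      refine ⟨f' o - f o, fun x => ?_⟩
      have h1 : f' x - f x = f' o - f o := hconst x o
      linarith
end

section
/- The function (x,y) ↦ R^F(x,y) is negative semidefinite: for any finitely supported f : V → ℝ with Σ_x f(x) = 0, one has Σ_{x,y} f(x) R^F(x,y) f(y) ≤ 0; indeed this sum equals −2‖Σ_x f(x) v_x‖_E². -/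
open scoped BigOperators

/-- `(x,y) ↦ R^F(x,y) = ‖v_x − v_y‖²` is negative semidefinite:
for any finitely supported `f : V → ℝ` with `Σ f = 0`,
`Σ_{x,y} f(x) R^F(x,y) f(y) = −2‖Σ_x f(x) v_x‖² ≤ 0`, where `{v_x} ⊂ H_E` is the
energy kernel and `R^F(x,y) = E(v_x − v_y)`. -/
theorem free_resistance_negative_semidefinite {V : Type*} {H : Type*}
    [NormedAddCommGroup H] [InnerProductSpace ℝ H]
    (v : V → H)
    (RF : V → V → ℝ) (hRF : ∀ x y, RF x y = ‖v x - v y‖ ^ 2)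
    (F : Finset V) (f : V → ℝ)
    (hsupp : ∀ x, f x ≠ 0 → x ∈ F)
    (hzero : ∑ x ∈ F, f x = 0) :
    (∑ x ∈ F, ∑ y ∈ F, f x * RF x y * f y)
        = -2 * ‖∑ x ∈ F, f x • v x‖ ^ 2 ∧
      ∑ x ∈ F, ∑ y ∈ F, f x * RF x y * f y ≤ 0 := by
  have hmain : (∑ x ∈ F, ∑ y ∈ F, f x * RF x y * f y)
      = -2 * ‖∑ x ∈ F, f x • v x‖ ^ 2 := by
    have hS : (‖∑ x ∈ F, f x • v x‖ : ℝ) ^ 2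
        = ∑ x ∈ F, ∑ y ∈ F, f x * f y * inner ℝ (v x) (v y) := by
      rw [← real_inner_self_eq_norm_sq, sum_inner]
      refine Finset.sum_congr rfl fun x _ => ?_
      rw [inner_sum]
      refine Finset.sum_congr rfl fun y _ => ?_
      rw [real_inner_smul_left, real_inner_smul_right]; ring
    calc ∑ x ∈ F, ∑ y ∈ F, f x * RF x y * f y
        = ∑ x ∈ F, ∑ y ∈ F,
            ((f x * ‖v x‖ ^ 2) * f y - 2 * (f x * f y * inner ℝ (v x) (v y))
              + f x * (f y * ‖v y‖ ^ 2)) := by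
          refine Finset.sum_congr rfl fun x _ => Finset.sum_congr rfl fun y _ => ?_
          rw [hRF, ← real_inner_self_eq_norm_sq, ← real_inner_self_eq_norm_sq,
            ← real_inner_self_eq_norm_sq, inner_sub_sub_self,
            real_inner_comm (v y) (v x)]
          ring
      _ = -2 * ‖∑ x ∈ F, f x • v x‖ ^ 2 := by
          simp only [Finset.sum_sub_distrib, Finset.sum_add_distrib, ← Finset.mul_sum,
            ← Finset.sum_mul, hzero, mul_zero, zero_mul, Finset.sum_const_zero,
            add_zero, zero_sub, zero_add, hS]
          simp only [show ∀ t : ℝ, -(2 * t) = -2 * t from fun t => by ring,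
            ← Finset.mul_sum]
  refine ⟨hmain, ?_⟩
  rw [hmain]
  nlinarith [sq_nonneg (‖∑ x ∈ F, f x • v x‖ : ℝ)]
end

section
/- For the commutator of a multiplication operator with the graph Laplacian on ℓ², one has the bound ‖[M_v, Δ]‖² ≤ 2 E(v) when all conductances equal 1; consequently the finite effective resistance satisfies R(x,y) ≤ sup{ |v(x) − v(y)|² : ‖[M_v, Δ]‖ ≤ √2 }. -/
open scoped BigOperators

/-- On a network with unit conductances, the commutator of
multiplication by `v` with the Laplacian on `ℓ²` satisfies
`‖[M_v, Δ]‖² ≤ 2 E(v)`; consequently the effective resistance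
`R(x,y) = sup{|v(x)−v(y)|² : E(v) ≤ 1}` satisfies
`R(x,y) ≤ sup{|v(x)−v(y)|² : ‖[M_v, Δ]‖ ≤ √2}`. -/
theorem commutator_bound_and_connes_metric {V : Type*} [Fintype V] [DecidableEq V]
    (c : V → V → ℝ)
    (hsymm : ∀ x y, c x y = c y x)
    (hbool : ∀ x y, c x y = 0 ∨ c x y = 1)
    (hloop : ∀ x, c x x = 0)
    (hconn : ∀ x y : V, Relation.ReflTransGen (fun a b => 0 < c a b) x y)
    (Lap : (V → ℝ) → (V → ℝ)) (hLap : ∀ u x, Lap u x = ∑ y : V, c x y * (u x - u y))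
    (comm : (V → ℝ) → (V → ℝ) → (V → ℝ))
    (hcomm : ∀ v u x, comm v u x = v x * Lap u x - Lap (fun z => v z * u z) x)
    (E : (V → ℝ) → ℝ)
    (hE : ∀ v, E v = (1 / 2) * ∑ x : V, ∑ y : V, c x y * (v x - v y) ^ 2)
    (R : V → V → ℝ)
    (hR : ∀ x y, R x y = sSup {r : ℝ | ∃ v : V → ℝ, E v ≤ 1 ∧ r = (v x - v y) ^ 2}) :
    (∀ v u : V → ℝ, ∑ x : V, (comm v u x) ^ 2 ≤ 2 * E v * ∑ x : V, (u x) ^ 2) ∧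
    (∀ x y : V, R x y ≤ sSup {r : ℝ | ∃ v : V → ℝ,
        (∀ u : V → ℝ, ∑ z : V, (comm v u z) ^ 2 ≤ 2 * ∑ z : V, (u z) ^ 2) ∧
        r = (v x - v y) ^ 2}) := by
  have hc_sq : ∀ x y, c x y ^ 2 = c x y := by
    intro x y; rcases hbool x y with h | h <;> rw [h] <;> ring
  have hc_nonneg : ∀ x y, 0 ≤ c x y := by
    intro x y; rcases hbool x y with h | h <;> rw [h] <;> norm_num
  have hc_le_one : ∀ x y, c x y ≤ 1 := by
    intro x y; rcases hbool x y with h | h <;> rw [h] <;> norm_num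
  -- formula for the commutator
  have hcomm' : ∀ v u x, comm v u x = ∑ y : V, c x y * (v y - v x) * u y := by
    intro v u x
    rw [hcomm, hLap, hLap, Finset.mul_sum, ← Finset.sum_sub_distrib]
    exact Finset.sum_congr rfl fun y _ => by ring
  -- Part 1
  have part1 : ∀ v u : V → ℝ, ∑ x : V, (comm v u x) ^ 2 ≤ 2 * E v * ∑ x : V, (u x) ^ 2 := by
    intro v u
    have key : ∀ x : V, comm v u x ^ 2 ≤
        (∑ y : V, c x y * (v y - v x) ^ 2) * ∑ y : V, u y ^ 2 := by
      intro x
      rw [hcomm']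
      calc (∑ y : V, c x y * (v y - v x) * u y) ^ 2
          = (∑ y : V, (c x y * (v y - v x)) * (c x y * u y)) ^ 2 := by
            congr 1
            refine Finset.sum_congr rfl fun y _ => ?_
            conv_lhs => rw [← hc_sq x y]
            ring
        _ ≤ (∑ y : V, (c x y * (v y - v x)) ^ 2) * ∑ y : V, (c x y * u y) ^ 2 :=
            Finset.sum_mul_sq_le_sq_mul_sq _ _ _
        _ = (∑ y : V, c x y * (v y - v x) ^ 2) * ∑ y : V, c x y * u y ^ 2 := by
            simp only [mul_pow, hc_sq]
        _ ≤ (∑ y : V, c x y * (v y - v x) ^ 2) * ∑ y : V, u y ^ 2 := by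
            apply mul_le_mul_of_nonneg_left
            · exact Finset.sum_le_sum fun y _ => by nlinarith [hc_le_one x y, sq_nonneg (u y), hc_nonneg x y]
            · exact Finset.sum_nonneg fun y _ => mul_nonneg (hc_nonneg x y) (sq_nonneg _)
    calc ∑ x : V, comm v u x ^ 2
        ≤ ∑ x : V, (∑ y : V, c x y * (v y - v x) ^ 2) * ∑ y : V, u y ^ 2 :=
          Finset.sum_le_sum fun x _ => key x
      _ = (∑ x : V, ∑ y : V, c x y * (v y - v x) ^ 2) * ∑ y : V, u y ^ 2 :=
          (Finset.sum_mul _ _ _).symm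
      _ = 2 * E v * ∑ x : V, u x ^ 2 := by
          rw [hE]
          have : ∀ x y : V, c x y * (v y - v x) ^ 2 = c x y * (v x - v y) ^ 2 :=
            fun x y => by ring
          simp_rw [this]
          ring
  refine ⟨part1, ?_⟩
  intro x y
  rw [hR]
  obtain ⟨l, hchain, hlast⟩ := List.exists_isChain_cons_of_relationReflTransGen (hconn x y)
  -- edge bound for v satisfying the commutator condition
  have edge : ∀ v : V → ℝ, (∀ u : V → ℝ, ∑ z : V, (comm v u z) ^ 2 ≤ 2 * ∑ z : V, (u z) ^ 2) →
      ∀ a b : V, 0 < c a b → (v a - v b) ^ 2 ≤ 2 := by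
    intro v hv a b hab
    have hcab : c a b = 1 := by
      rcases hbool a b with h | h
      · rw [h] at hab; linarith
      · exact h
    set u : V → ℝ := fun z => if z = b then (1 : ℝ) else 0 with hu
    have hcommu : ∀ z : V, comm v u z = c z b * (v b - v z) := by
      intro z
      rw [hcomm']
      rw [Finset.sum_eq_single b]
      · simp [hu]
      · intro w _ hw; simp [hu, hw]
      · simp
    have husum : ∑ z : V, u z ^ 2 = 1 := by
      simp [hu, Finset.sum_ite_eq']
    have h1 := hv u
    rw [husum] at h1
    have h2 : (v b - v a) ^ 2 ≤ ∑ z : V, comm v u z ^ 2 := by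
      have h3 : comm v u a ^ 2 ≤ ∑ z : V, comm v u z ^ 2 :=
        Finset.single_le_sum (f := fun z => comm v u z ^ 2)
          (fun z _ => sq_nonneg _) (Finset.mem_univ a)
      rw [hcommu a, hcab] at h3
      simpa using h3
    nlinarith [h2, h1]
  -- chain bound
  have chainbound : ∀ (v : V → ℝ), (∀ a b : V, 0 < c a b → (v a - v b) ^ 2 ≤ 2) →
      ∀ (t : List V) (a : V), List.Chain (fun p q => 0 < c p q) a t →
      |v a - v ((a :: t).getLast (List.cons_ne_nil _ _))| ≤ Real.sqrt 2 * t.length := by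
    intro v hv t
    induction t with
    | nil => intro a _; simp
    | cons b t ih =>
      intro a hch
      change List.IsChain _ (a :: b :: t) at hch
      rw [List.isChain_cons_cons] at hch
      have h1 : |v a - v b| ≤ Real.sqrt 2 := by
        have h := hv a b hch.1
        calc |v a - v b| = Real.sqrt ((v a - v b) ^ 2) := (Real.sqrt_sq_eq_abs _).symm
          _ ≤ Real.sqrt 2 := Real.sqrt_le_sqrt h
      have h2 := ih b hch.2
      have hlast2 : (a :: b :: t).getLast (List.cons_ne_nil _ _)
          = (b :: t).getLast (List.cons_ne_nil _ _) := List.getLast_cons_cons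
      rw [hlast2]
      calc |v a - v ((b :: t).getLast (List.cons_ne_nil _ _))|
          ≤ |v a - v b| + |v b - v ((b :: t).getLast (List.cons_ne_nil _ _))| :=
            abs_sub_le _ _ _
        _ ≤ Real.sqrt 2 + Real.sqrt 2 * t.length := add_le_add h1 h2
        _ = Real.sqrt 2 * (b :: t).length := by
            simp [List.length_cons]; push_cast; ring
  -- the target set is bounded above
  have bdd : BddAbove {r : ℝ | ∃ v : V → ℝ,
      (∀ u : V → ℝ, ∑ z : V, (comm v u z) ^ 2 ≤ 2 * ∑ z : V, (u z) ^ 2) ∧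
      r = (v x - v y) ^ 2} := by
    refine ⟨2 * (l.length : ℝ) ^ 2, ?_⟩
    rintro r ⟨v, hv, rfl⟩
    have he := edge v hv
    have hc := chainbound v he l x hchain
    rw [hlast] at hc
    have h0 : (0 : ℝ) ≤ Real.sqrt 2 * l.length := by positivity
    nlinarith [sq_abs (v x - v y), Real.sq_sqrt (by norm_num : (0:ℝ) ≤ 2), abs_nonneg (v x - v y)]
  have hmem0 : (0 : ℝ) ∈ {r : ℝ | ∃ v : V → ℝ,
      (∀ u : V → ℝ, ∑ z : V, (comm v u z) ^ 2 ≤ 2 * ∑ z : V, (u z) ^ 2) ∧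
      r = (v x - v y) ^ 2} := by
    refine ⟨fun _ => 0, fun u => ?_, by ring⟩
    have : ∀ z : V, comm (fun _ => 0) u z = 0 := by
      intro z; rw [hcomm']; simp
    simp only [this]
    have : (0:ℝ) ≤ ∑ z : V, u z ^ 2 := Finset.sum_nonneg fun z _ => sq_nonneg _
    simp; linarith
  apply Real.sSup_le
  · rintro r ⟨v, hEv, rfl⟩
    apply le_csSup bdd
    refine ⟨v, fun u => ?_, rfl⟩
    have h1 := part1 v u
    have h2 : (0:ℝ) ≤ ∑ z : V, u z ^ 2 := Finset.sum_nonneg fun z _ => sq_nonneg _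
    nlinarith
  · exact le_csSup bdd hmem0
end
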